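/- For any parameters f ∈ (0,1) and κ, γ₁, γ₂, γ₃ > 0, the ZIP regulatory system has no steady state on the boundary of the cube S = [0,1]⁴: every u* ∈ [0,1]⁴ with F(u*) = 0 satisfies 0 < uᵢ* < 1 for i = 1,2,3,4. -/
import Mathlib


/-- The ZIP regulatory vector field on ℝ⁴ (components indexed by `Fin 4`). -/
noncomputable def zipField (κ γ₁ γ₂ γ₃ f : ℝ) (u : Fin 4 → ℝ) : Fin 4 → ℝ :=
  ![κ * (u 2) ^ 2 * (1 - u 0) - u 0,
    u 0 * f - u 1,
    1 - γ₁ * u 2 * u 3 - u 2,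
    γ₂ * u 1 - γ₃ * u 2 * u 3 - (1 + γ₂ * u 1) * u 3]

/-- the ZIP regulatory system has no steady state on the boundary
of the cube S = [0,1]⁴: every steady state in S lies in the open cube (0,1)⁴. -/
theorem zip_no_boundary_steady_state
    (κ γ₁ γ₂ γ₃ f : ℝ) (hκ : 0 < κ) (hγ₁ : 0 < γ₁) (hγ₂ : 0 < γ₂) (hγ₃ : 0 < γ₃)
    (hf : f ∈ Set.Ioo (0 : ℝ) 1)
    (u : Fin 4 → ℝ) (hu : ∀ i, u i ∈ Set.Icc (0 : ℝ) 1)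
    (hsteady : zipField κ γ₁ γ₂ γ₃ f u = 0) :
    ∀ i, u i ∈ Set.Ioo (0 : ℝ) 1 := by
  have e0 := congrFun hsteady 0
  have e1 := congrFun hsteady 1
  have e2 := congrFun hsteady 2
  have e3 := congrFun hsteady 3
  simp only [zipField, Matrix.cons_val_zero, Matrix.cons_val_one, Matrix.head_cons,
    Matrix.cons_val_two, Matrix.tail_cons, Matrix.cons_val_three, Pi.zero_apply] at e0 e1 e2 e3
  obtain ⟨h00, h01⟩ := hu 0
  obtain ⟨h10, h11⟩ := hu 1
  obtain ⟨h20, h21⟩ := hu 2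
  obtain ⟨h30, h31⟩ := hu 3
  obtain ⟨hf0, hf1⟩ := hf
  -- u 2 > 0 from e2
  have hu2pos : 0 < u 2 := by
    rcases h20.lt_or_eq with h | h
    · exact h
    · exfalso; rw [← h] at e2; norm_num at e2
  -- u 3 > 0
  have hu3pos : 0 < u 3 := by
    rcases h30.lt_or_eq with h | h
    · exact h
    · exfalso
      rw [← h] at e2 e3
      norm_num at e2 e3
      have hu1 : u 1 = 0 := by
        rcases e3 with e3 | e3
        · linarith
        · exact e3
      rw [hu1] at e1
      have hu0 : u 0 = 0 := by
        rcases mul_eq_zero.mp (by linarith : u 0 * f = 0) with h' | h'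
        · exact h'
        · exact absurd h' (ne_of_gt hf0)
      have hu2 : u 2 = 1 := by linarith
      rw [hu0, hu2] at e0
      norm_num at e0
      exact absurd e0 (ne_of_gt hκ)
  -- u 1 > 0 from e3
  have hu1pos : 0 < u 1 := by
    nlinarith [mul_pos (mul_pos hγ₃ hu2pos) hu3pos, mul_nonneg (mul_nonneg hγ₂.le h10) h30]
  -- u 0 > 0 from e1
  have hu0pos : 0 < u 0 := by
    rcases h00.lt_or_eq with h | h
    · exact h
    · exfalso; rw [← h] at e1; norm_num at e1; linarith
  -- u 0 < 1 from e0
  have hu0lt : u 0 < 1 := by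
    rcases h01.lt_or_eq with h | h
    · exact h
    · exfalso; rw [h] at e0; norm_num at e0
  -- u 1 < 1
  have hu1lt : u 1 < 1 := by
    have := mul_lt_of_lt_one_right hu0pos hf1
    linarith
  -- u 2 < 1
  have hu2lt : u 2 < 1 := by
    have := mul_pos (mul_pos hγ₁ hu2pos) hu3pos
    linarith
  -- u 3 < 1
  have hu3lt : u 3 < 1 := by
    rcases h31.lt_or_eq with h | h
    · exact h
    · exfalso; rw [h] at e3; nlinarith [mul_pos hγ₃ hu2pos]
  intro i
  fin_cases i <;> exact ⟨by assumption, by assumption⟩
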